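/- In a qubit system, the four-outcome POVM A = ((1/2)|0⟩⟨0|, (1/2)|1⟩⟨1|, (1/2)|+⟩⟨+|, (1/2)|−⟩⟨−|), with |±⟩ = (|0⟩ ± |1⟩)/√2, satisfies: for any two distinct elements a_x, a_{x'}, range(a_x) ∩ range(a_{x'}) = {0} (hence A is intersubjective), but the coarse-graining ((1/2)|0⟩⟨0| + (1/2)|1⟩⟨1|, (1/2)|+⟩⟨+| + (1/2)|−⟩⟨−|) = (I/2, I/2) is not elementwise sharp, since the positive operator I/4 satisfies I/4 ≤ I/2 for both elements but I/4 ≠ 0. -/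

import Mathlib

open scoped ComplexOrder

/-- The rank-one operator `|ψ⟩⟨ψ|` for a vector `ψ ∈ ℂ²`. -/
noncomputable def outer (v : Fin 2 → ℂ) : Matrix (Fin 2) (Fin 2) ℂ :=
  Matrix.vecMulVec v (star v)

noncomputable def ketZero : Fin 2 → ℂ := ![1, 0]
noncomputable def ketOne : Fin 2 → ℂ := ![0, 1]
noncomputable def ketPlus : Fin 2 → ℂ := ![1 / (Real.sqrt 2 : ℂ), 1 / (Real.sqrt 2 : ℂ)]
noncomputable def ketMinus : Fin 2 → ℂ := ![1 / (Real.sqrt 2 : ℂ), -(1 / (Real.sqrt 2 : ℂ))]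

/-- The four-outcome qubit POVM `((1/2)|0⟩⟨0|, (1/2)|1⟩⟨1|, (1/2)|+⟩⟨+|, (1/2)|−⟩⟨−|)`. -/
noncomputable def A14 : Fin 4 → Matrix (Fin 2) (Fin 2) ℂ :=
  ![(1 / 2 : ℝ) • outer ketZero, (1 / 2 : ℝ) • outer ketOne,
    (1 / 2 : ℝ) • outer ketPlus, (1 / 2 : ℝ) • outer ketMinus]

lemma outer_posSemidef (w : Fin 2 → ℂ) : (outer w).PosSemidef := by
  have h : outer w = (Matrix.replicateRow Unit (star w)).conjTranspose * Matrix.replicateRow Unit (star w) := by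
    ext i j
    simp [outer, Matrix.vecMulVec, Matrix.mul_apply, Matrix.replicateRow, Matrix.conjTranspose]
  rw [h]
  exact Matrix.posSemidef_conjTranspose_mul_self _

lemma smul_psd (c : ℝ) (hc : 0 ≤ c) {M : Matrix (Fin 2) (Fin 2) ℂ} (hM : M.PosSemidef) :
    (c • M).PosSemidef := by
  constructor
  · unfold Matrix.IsHermitian
    rw [Matrix.conjTranspose_smul, hM.1.eq]
    simp
  · intro x
    have e : (x.sum fun i xi => x.sum fun j xj => star xi * (c • M) i j * xj) =
        (c : ℂ) * (x.sum fun i xi => x.sum fun j xj => star xi * M i j * xj) := by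
      rw [Finsupp.mul_sum]
      refine Finsupp.sum_congr fun i _ => ?_
      rw [Finsupp.mul_sum]
      refine Finsupp.sum_congr fun j _ => ?_
      simp only [Matrix.smul_apply, Complex.real_smul]
      ring
    rw [e]
    exact mul_nonneg (by exact_mod_cast hc) (hM.2 x)

lemma mulVec_outer (v x : Fin 2 → ℂ) :
    (outer v).mulVec x = (dotProduct (star v) x) • v := by
  funext i
  simp [outer, Matrix.vecMulVec, Matrix.mulVec, dotProduct, Finset.mul_sum]
  ring_nf

lemma range_le (c : ℝ) (v : Fin 2 → ℂ) :
    LinearMap.range ((c • outer v).mulVecLin) ≤ (Submodule.span ℂ {v}) := by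
  rintro _ ⟨x, rfl⟩
  rw [Matrix.mulVecLin_apply, Matrix.smul_mulVec, mulVec_outer]
  exact Submodule.smul_mem _ _ (Submodule.smul_mem _ _ (Submodule.mem_span_singleton_self v))

lemma span_inf (v w : Fin 2 → ℂ) (h : v 0 * w 1 ≠ v 1 * w 0) :
    (Submodule.span ℂ {v}) ⊓ (Submodule.span ℂ {w}) = ⊥ := by
  rw [eq_bot_iff]
  rintro x ⟨hx, hy⟩
  obtain ⟨a, rfl⟩ := Submodule.mem_span_singleton.mp hx
  obtain ⟨b, hb⟩ := Submodule.mem_span_singleton.mp hy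
  have h0 := congrFun hb 0
  have h1 := congrFun hb 1
  simp only [Pi.smul_apply, smul_eq_mul] at h0 h1
  have ha : a = 0 := by
    by_contra ha
    apply h
    have e1 : a * (v 0 * w 1) = a * (v 1 * w 0) := by
      calc a * (v 0 * w 1) = (a * v 0) * w 1 := by ring
        _ = (b * w 0) * w 1 := by rw [h0]
        _ = (b * w 1) * w 0 := by ring
        _ = (a * v 1) * w 0 := by rw [h1]
        _ = a * (v 1 * w 0) := by ring
    exact mul_left_cancel₀ ha e1
  simp [ha]

lemma ranges_bot (c d : ℝ) (v w : Fin 2 → ℂ) (h : v 0 * w 1 ≠ v 1 * w 0) :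
    LinearMap.range ((c • outer v).mulVecLin) ⊓ LinearMap.range ((d • outer w).mulVecLin) = ⊥ :=
  le_bot_iff.mp ((inf_le_inf (range_le c v) (range_le d w)).trans (span_inf v w h).le)

lemma sqrt2_ne : (Real.sqrt 2 : ℂ) ≠ 0 := by
  exact_mod_cast Real.sqrt_ne_zero'.mpr (by norm_num)

lemma s_mul_s : (1 / (Real.sqrt 2 : ℂ)) * (1 / (Real.sqrt 2 : ℂ)) = 1 / 2 := by
  rw [div_mul_div_comm, one_mul]
  norm_cast
  rw [Real.mul_self_sqrt (by norm_num)]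
  norm_num

lemma inv_sqrt2_sq : ((Real.sqrt 2 : ℂ))⁻¹ * ((Real.sqrt 2 : ℂ))⁻¹ = 1 / 2 := by
  rw [← one_div]
  exact s_mul_s

lemma s_ne : (1 / (Real.sqrt 2 : ℂ)) ≠ 0 := one_div_ne_zero sqrt2_ne

/-- `A14` is a POVM whose distinct elements have trivially intersecting ranges
(hence it is intersubjective), yet its coarse-graining into `(I/2, I/2)` is not elementwise
sharp: the positive operator `I/4` is below both elements `I/2` but nonzero. -/
theorem qubit_intersubjective_but_coarse_graining_not_sharp :
    (∀ i, (A14 i).PosSemidef) ∧ (∑ i, A14 i = 1) ∧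
      (∀ i j, i ≠ j →
        LinearMap.range (A14 i).mulVecLin ⊓ LinearMap.range (A14 j).mulVecLin = ⊥) ∧
      (A14 0 + A14 1 = (1 / 2 : ℝ) • (1 : Matrix (Fin 2) (Fin 2) ℂ)) ∧
      (A14 2 + A14 3 = (1 / 2 : ℝ) • (1 : Matrix (Fin 2) (Fin 2) ℂ)) ∧
      ((1 / 4 : ℝ) • (1 : Matrix (Fin 2) (Fin 2) ℂ)).PosSemidef ∧
      ((1 / 2 : ℝ) • (1 : Matrix (Fin 2) (Fin 2) ℂ)
        - (1 / 4 : ℝ) • (1 : Matrix (Fin 2) (Fin 2) ℂ)).PosSemidef ∧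
      (1 / 4 : ℝ) • (1 : Matrix (Fin 2) (Fin 2) ℂ) ≠ 0 := by
  have h2 : Real.sqrt 2 * Real.sqrt 2 = 2 := Real.mul_self_sqrt (by norm_num)
  have hsum01 : A14 0 + A14 1 = (1 / 2 : ℝ) • (1 : Matrix (Fin 2) (Fin 2) ℂ) := by
    show (1 / 2 : ℝ) • outer ketZero + (1 / 2 : ℝ) • outer ketOne = _
    ext i j
    fin_cases i <;> fin_cases j <;>
      simp [outer, ketZero, ketOne, Matrix.vecMulVec, Matrix.one_apply]
  have hsum23 : A14 2 + A14 3 = (1 / 2 : ℝ) • (1 : Matrix (Fin 2) (Fin 2) ℂ) := by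
    show (1 / 2 : ℝ) • outer ketPlus + (1 / 2 : ℝ) • outer ketMinus = _
    ext i j
    fin_cases i <;> fin_cases j <;>
      simp [outer, ketPlus, ketMinus, Matrix.vecMulVec, Matrix.one_apply, Complex.ext_iff] <;>
      nlinarith [h2, Real.sqrt_nonneg 2]
  refine ⟨?_, ?_, ?_, hsum01, hsum23, ?_, ?_, ?_⟩
  · intro i
    fin_cases i <;> exact smul_psd _ (by norm_num) (outer_posSemidef _)
  · rw [Fin.sum_univ_four]
    show A14 0 + A14 1 + A14 2 + A14 3 = 1
    rw [add_assoc (A14 0 + A14 1), hsum01, hsum23, ← add_smul]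
    norm_num
  · intro i j hij
    fin_cases i <;> fin_cases j <;> first
      | exact absurd rfl hij
      | · show LinearMap.range ((_ • outer _).mulVecLin) ⊓
            LinearMap.range ((_ • outer _).mulVecLin) = ⊥
          exact ranges_bot _ _ _ _ (by
            simp [ketZero, ketOne, ketPlus, ketMinus, s_ne, s_mul_s]
            all_goals first
            | exact fun h => sqrt2_ne h.symm
            | norm_num [inv_sqrt2_sq])
  · exact smul_psd _ (by norm_num) Matrix.PosSemidef.one
  · rw [show ((1 / 2 : ℝ) • (1 : Matrix (Fin 2) (Fin 2) ℂ)
        - (1 / 4 : ℝ) • (1 : Matrix (Fin 2) (Fin 2) ℂ)) = (1/4:ℝ) • 1 by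
        rw [← sub_smul]; norm_num]
    exact smul_psd _ (by norm_num) Matrix.PosSemidef.one
  · intro h
    have := congrFun (congrFun h 0) 0
    simp [Matrix.one_apply] at this
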